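/- For fixed complex numbers I_1,…,I_{g+1}, V_1,…,V_{g+1}, there exist complex numbers c_0, c_1, …, c_g, depending only on I and V (not on x or y), such that for all x ∈ ℂ and all y ∈ ℂ with y ≠ 0: y·det(x·𝟙 + L) = y² + y·(x^{g+1} + c_g x^g + ⋯ + c_1 x + c_0) + Π_{i=1}^{g+1} I_i V_i. In other words, the spectral polynomial f̃(x,y) = y·det(x·𝟙 + L) is quadratic and monic in y, its y-coefficient is a monic polynomial of degree g+1 in x, and its constant term is c_{−1} = Π_{i=1}^{g+1} I_i V_i. -/

import Mathlib

open Matrix Polynomial Finset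

/-- The Lax matrix without corner terms: diagonal `d`, superdiagonal `1`, subdiagonal `e`. -/
def baseM (g : ℕ) {R : Type*} [CommRing R] (d e : Fin (g + 1) → R) :
    Matrix (Fin (g + 1)) (Fin (g + 1)) R :=
  Matrix.of fun i j =>
    (if (j : ℕ) = (i : ℕ) then d i else 0)
    + (if (i : ℕ) + 1 = (j : ℕ) then 1 else 0)
    + (if (j : ℕ) + 1 = (i : ℕ) then e i else 0)

lemma baseM_map (g : ℕ) {R S : Type*} [CommRing R] [CommRing S] (f : R →+* S)
    (d e : Fin (g + 1) → R) :
    (baseM g d e).map f = baseM g (f ∘ d) (f ∘ e) := by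
  ext i j
  simp only [baseM, Matrix.map_apply, Matrix.of_apply, Function.comp]
  split_ifs <;> simp

lemma updateRow_map' {m n α β : Type*} [DecidableEq m] (M : Matrix m n α) (i : m)
    (r : n → α) (f : α → β) :
    (M.updateRow i r).map f = (M.map f).updateRow i (f ∘ r) := by
  ext a b
  by_cases h : a = i <;> simp [Matrix.updateRow_apply, h]

lemma updateRow_comm' {n α : Type*} [DecidableEq n] (M : Matrix n n α) {i j : n}
    (h : i ≠ j) (r s : n → α) :
    (M.updateRow i r).updateRow j s = (M.updateRow j s).updateRow i r := by
  ext a b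
  by_cases ha : a = i <;> by_cases hb : a = j <;>
    simp_all [Matrix.updateRow_apply]

/-- det of the base matrix with last row replaced by `e₀`. -/
lemma det_beta (g : ℕ) {R : Type*} [CommRing R] (d e : Fin (g + 1) → R) :
    ((baseM g d e).updateRow (Fin.last g) (Pi.single 0 1)).det = (-1) ^ g := by
  set M := (baseM g d e).updateRow (Fin.last g) (Pi.single 0 1) with hM
  rw [Matrix.det_succ_row M (Fin.last g)]
  rw [Finset.sum_eq_single (0 : Fin (g + 1))]
  · have h1 : M (Fin.last g) 0 = 1 := by simp [hM]
    have hminor : (M.submatrix (Fin.last g).succAbove (0 : Fin (g + 1)).succAbove).det = 1 := by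
      have hsub : ∀ (i j : Fin g),
          (M.submatrix (Fin.last g).succAbove (0 : Fin (g + 1)).succAbove) i j
            = baseM g d e i.castSucc j.succ := by
        intro i j
        simp only [Matrix.submatrix_apply, Fin.succAbove_last, Fin.zero_succAbove, hM]
        rw [Matrix.updateRow_ne (Fin.castSucc_lt_last i).ne]
      have htri : (M.submatrix (Fin.last g).succAbove (0 : Fin (g + 1)).succAbove).BlockTriangular
          ⇑OrderDual.toDual := by
        intro i j hij
        have hij' : (i : ℕ) < (j : ℕ) := hij
        rw [hsub]
        simp only [baseM, Matrix.of_apply, Fin.coe_castSucc, Fin.val_succ]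
        split_ifs <;> (first | ring1 | (exfalso; omega))
      rw [Matrix.det_of_lowerTriangular _ htri]
      have hdiag : ∀ i : Fin g,
          (M.submatrix (Fin.last g).succAbove (0 : Fin (g + 1)).succAbove) i i = 1 := by
        intro i
        rw [hsub]
        simp only [baseM, Matrix.of_apply, Fin.coe_castSucc, Fin.val_succ]
        split_ifs <;> (first | ring1 | (exfalso; omega))
      rw [Finset.prod_eq_one fun i _ => hdiag i]
    rw [h1, hminor]
    simp
  · intro j _ hj
    have : M (Fin.last g) j = 0 := by
      simp [hM, Pi.single_apply, hj.symm]
    rw [this]; ring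
  · simp

/-- det of the base matrix with first row replaced by `e_g`. -/
lemma det_gamma (g : ℕ) {R : Type*} [CommRing R] (hg : 1 ≤ g) (d e : Fin (g + 1) → R) :
    ((baseM g d e).updateRow 0 (Pi.single (Fin.last g) 1)).det
      = (-1) ^ g * ∏ i : Fin g, e i.succ := by
  set M := (baseM g d e).updateRow 0 (Pi.single (Fin.last g) 1) with hM
  rw [Matrix.det_succ_row M 0]
  rw [Finset.sum_eq_single (Fin.last g)]
  · have h1 : M 0 (Fin.last g) = 1 := by simp [hM]
    have hsub : ∀ (i j : Fin g),
        (M.submatrix (0 : Fin (g + 1)).succAbove (Fin.last g).succAbove) i j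
          = baseM g d e i.succ j.castSucc := by
      intro i j
      simp only [Matrix.submatrix_apply, Fin.succAbove_last, Fin.zero_succAbove, hM]
      rw [Matrix.updateRow_ne (Fin.succ_ne_zero i)]
    have htri : (M.submatrix (0 : Fin (g + 1)).succAbove (Fin.last g).succAbove).BlockTriangular
        id := by
      intro i j hij
      have hij' : (j : ℕ) < (i : ℕ) := hij
      rw [hsub]
      simp only [baseM, Matrix.of_apply, Fin.coe_castSucc, Fin.val_succ]
      split_ifs <;> (first | ring1 | (exfalso; omega))
    have hminor : (M.submatrix (0 : Fin (g + 1)).succAbove (Fin.last g).succAbove).det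
        = ∏ i : Fin g, e i.succ := by
      rw [Matrix.det_of_upperTriangular htri]
      refine Finset.prod_congr rfl fun i _ => ?_
      rw [hsub]
      simp only [baseM, Matrix.of_apply, Fin.coe_castSucc, Fin.val_succ]
      split_ifs <;> (first | ring1 | (exfalso; omega))
    rw [h1, hminor]
    simp
  · intro j _ hj
    have : M 0 j = 0 := by
      simp [hM, Pi.single_apply, hj]
    rw [this]; ring
  · simp

lemma baseM_eq_charmatrix (g : ℕ) (d e : Fin (g + 1) → ℂ) :
    baseM g (fun i => (X : ℂ[X]) + C (d i)) (fun i => C (e i))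
      = Matrix.charmatrix (-(baseM g d e)) := by
  refine Matrix.ext fun i j => ?_
  rw [Matrix.charmatrix_apply]
  simp only [baseM, Matrix.of_apply, Matrix.diagonal_apply, Matrix.neg_apply,
    map_neg, map_add, sub_neg_eq_add, apply_ite C, map_zero, _root_.map_one, Fin.ext_iff]
  split_ifs <;> (first | ring1 | (exfalso; omega))

lemma natDegree_delta_le (g : ℕ) (d e : Fin (g + 1) → ℂ) :
    (((baseM g (fun i => (X : ℂ[X]) + C (d i)) (fun i => C (e i))).updateRow 0
        (Pi.single (Fin.last g) 1)).updateRow (Fin.last g) (Pi.single 0 1)).det.natDegree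
      ≤ g := by
  set Δ := ((baseM g (fun i => (X : ℂ[X]) + C (d i)) (fun i => C (e i))).updateRow 0
      (Pi.single (Fin.last g) 1)).updateRow (Fin.last g) (Pi.single 0 1) with hΔ
  have hent : ∀ a b, (Δ a b).natDegree ≤ 1 := by
    intro a b
    by_cases hal : a = Fin.last g
    · subst hal
      rw [hΔ, Matrix.updateRow_self]
      rcases eq_or_ne b 0 with h | h <;> simp [Pi.single_apply, h]
    · rw [hΔ, Matrix.updateRow_ne hal]
      by_cases ha0 : a = 0
      · subst ha0
        rw [Matrix.updateRow_self]
        rcases eq_or_ne b (Fin.last g) with h | h <;> simp [Pi.single_apply, h]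
      · rw [Matrix.updateRow_ne ha0]
        simp only [baseM, Matrix.of_apply]
        refine le_trans (natDegree_add_le _ _) ?_
        refine max_le (le_trans (natDegree_add_le _ _) (max_le ?_ ?_)) ?_ <;>
          split_ifs <;> simp [natDegree_X_add_C]
  rw [Matrix.det_apply]
  refine Polynomial.natDegree_sum_le_of_forall_le _ _ fun σ _ => ?_
  have hsmul : (Equiv.Perm.sign σ • ∏ i, Δ (σ i) i).natDegree
      ≤ (∏ i, Δ (σ i) i).natDegree := by
    rw [Units.smul_def, zsmul_eq_mul]
    refine le_trans (natDegree_mul_le) ?_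
    simp [Polynomial.natDegree_intCast]
  refine le_trans hsmul ?_
  rw [← Finset.mul_prod_erase Finset.univ _ (Finset.mem_univ (σ⁻¹ (Fin.last g)))]
  refine le_trans natDegree_mul_le ?_
  have h0 : (Δ (σ (σ⁻¹ (Fin.last g))) (σ⁻¹ (Fin.last g))).natDegree = 0 := by
    rw [show σ (σ⁻¹ (Fin.last g)) = Fin.last g by simp, hΔ, Matrix.updateRow_self]
    rcases eq_or_ne (σ⁻¹ (Fin.last g)) 0 with h | h <;> simp_all [Pi.single_apply]
  rw [h0, zero_add]
  refine le_trans (Polynomial.natDegree_prod_le _ _) ?_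
  calc ∑ i ∈ Finset.univ.erase (σ⁻¹ (Fin.last g)), (Δ (σ i) i).natDegree
      ≤ (Finset.univ.erase (σ⁻¹ (Fin.last g))).card • 1 :=
        Finset.sum_le_card_nsmul _ _ 1 fun i _ => hent _ _
    _ ≤ g := by
        rw [Finset.card_erase_of_mem (Finset.mem_univ _), Finset.card_univ, Fintype.card_fin]
        simp

/-- The Lax matrix `L(I;V)` of the periodic discrete Toda lattice (0-indexed:
row/column `i : Fin (g+1)` corresponds to the 1-indexed `i+1`).  Its entries are
`L_{ii} = I_{i+1} + V_i` (cyclically, so the last diagonal entry is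
`I_1 + V_{g+1}`), `L_{i,i+1} = 1`, `L_{i+1,i} = I_{i+1} V_{i+1}`,
`L_{1,g+1} = (-1)^g I_1 V_1 / y`, `L_{g+1,1} = (-1)^g y`,
all other entries `0`. -/
noncomputable def todaLax (g : ℕ) (I V : Fin (g + 1) → ℂ) (y : ℂ) :
    Matrix (Fin (g + 1)) (Fin (g + 1)) ℂ :=
  Matrix.of fun i j =>
    (if j = i then I (i + 1) + V i else 0)
    + (if (i : ℕ) + 1 = (j : ℕ) then 1 else 0)
    + (if (j : ℕ) + 1 = (i : ℕ) then I i * V i else 0)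
    + (if (i : ℕ) = 0 ∧ (j : ℕ) = g then (-1) ^ g * I 0 * V 0 / y else 0)
    + (if (i : ℕ) = g ∧ (j : ℕ) = 0 then (-1) ^ g * y else 0)

set_option maxHeartbeats 1000000 in
theorem todaLax_spectral_polynomial (g : ℕ) (hg : 1 ≤ g) (I V : Fin (g + 1) → ℂ) :
    ∃ c : Fin (g + 1) → ℂ, ∀ x y : ℂ, y ≠ 0 →
      y * (x • (1 : Matrix (Fin (g + 1)) (Fin (g + 1)) ℂ) + todaLax g I V y).det =
        y ^ 2 + y * (x ^ (g + 1) + ∑ k : Fin (g + 1), c k * x ^ (k : ℕ)) +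
          ∏ i, I i * V i := by
  classical
  set dd : Fin (g + 1) → ℂ := fun i => I (i + 1) + V i with hdd
  set ee : Fin (g + 1) → ℂ := fun i => I i * V i with hee
  set Bp : Matrix (Fin (g + 1)) (Fin (g + 1)) ℂ[X] :=
    baseM g (fun i => (X : ℂ[X]) + C (dd i)) (fun i => C (ee i)) with hBpdef
  set Δp : Matrix (Fin (g + 1)) (Fin (g + 1)) ℂ[X] :=
    (Bp.updateRow 0 (Pi.single (Fin.last g) 1)).updateRow (Fin.last g) (Pi.single 0 1) with hΔpdef
  set q : ℂ[X] := Bp.det + C (I 0 * V 0) * Δp.det with hqdef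
  -- degree facts
  have hBdet : Bp.det = (-(baseM g dd ee)).charpoly := by
    rw [hBpdef, baseM_eq_charmatrix]; rfl
  have hBdeg : Bp.det.natDegree = g + 1 := by
    rw [hBdet, Matrix.charpoly_natDegree_eq_dim, Fintype.card_fin]
  have hBmon : Bp.det.Monic := by rw [hBdet]; exact Matrix.charpoly_monic _
  have hΔdeg : Δp.det.natDegree ≤ g := natDegree_delta_le g dd ee
  have hCdeg : (C (I 0 * V 0) * Δp.det).natDegree ≤ g :=
    le_trans (natDegree_mul_le) (by rw [Polynomial.natDegree_C, zero_add]; exact hΔdeg)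
  have hqdeg : q.natDegree ≤ g + 1 :=
    le_trans (natDegree_add_le _ _) (max_le hBdeg.le (le_trans hCdeg (Nat.le_succ g)))
  have hBc : Bp.det.coeff (g + 1) = 1 := by
    have h := hBmon.coeff_natDegree
    rwa [hBdeg] at h
  have hclead : q.coeff (g + 1) = 1 := by
    rw [hqdef, Polynomial.coeff_add,
      Polynomial.coeff_eq_zero_of_natDegree_lt (lt_of_le_of_lt hCdeg (Nat.lt_succ_self g)),
      add_zero, hBc]
  refine ⟨fun k => q.coeff k, fun x y hy => ?_⟩
  set Bx : Matrix (Fin (g + 1)) (Fin (g + 1)) ℂ := baseM g (fun i => x + dd i) ee with hBxdef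
  have hl0 : Fin.last g ≠ (0 : Fin (g + 1)) := by
    simp only [ne_eq, Fin.ext_iff, Fin.val_last, Fin.val_zero, true_and, and_true]; omega
  -- row decomposition
  have hA : x • (1 : Matrix (Fin (g + 1)) (Fin (g + 1)) ℂ) + todaLax g I V y =
      (Bx.updateRow 0 (Bx 0 + ((-1) ^ g * I 0 * V 0 / y) • (Pi.single (Fin.last g) 1 : Fin (g+1) → ℂ))).updateRow
        (Fin.last g) (Bx (Fin.last g) + ((-1) ^ g * y) • (Pi.single 0 1 : Fin (g+1) → ℂ)) := by
    refine Matrix.ext fun i j => ?_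
    by_cases hil : i = Fin.last g
    · subst hil
      rw [Matrix.updateRow_self]
      simp only [Matrix.add_apply, Matrix.smul_apply, Matrix.one_apply, smul_eq_mul,
        todaLax, baseM, hdd, hee, hBxdef, Matrix.of_apply, Pi.add_apply, Pi.smul_apply, Pi.single_apply,
        Fin.ext_iff, Fin.val_last, Fin.val_zero, true_and, and_true]
      split_ifs <;> (first | ring1 | (exfalso; omega))
    · rw [Matrix.updateRow_ne hil]
      have hil' : (i : ℕ) ≠ g := fun h => hil (by simp [Fin.ext_iff, Fin.val_last, h])
      by_cases hi0 : i = 0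
      · subst hi0
        rw [Matrix.updateRow_self]
        simp only [Matrix.add_apply, Matrix.smul_apply, Matrix.one_apply, smul_eq_mul,
          todaLax, baseM, hdd, hee, hBxdef, Matrix.of_apply, Pi.add_apply, Pi.smul_apply, Pi.single_apply,
          Fin.ext_iff, Fin.val_last, true_and, and_true]
        have h00 : ((0 : Fin (g + 1)) : ℕ) = 0 := Fin.val_zero _
        split_ifs <;> (first | ring1 | (exfalso; omega))
      · rw [Matrix.updateRow_ne hi0]
        have hi0' : (i : ℕ) ≠ 0 := fun h => hi0 (by simp [Fin.ext_iff, h])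
        simp only [Matrix.add_apply, Matrix.smul_apply, Matrix.one_apply, smul_eq_mul,
          todaLax, baseM, hdd, hee, hBxdef, Matrix.of_apply, Fin.ext_iff, Fin.val_last, Fin.val_zero, true_and, and_true]
        split_ifs <;> (first | ring1 | (exfalso; omega))
  -- determinant decomposition
  set r0 : Fin (g + 1) → ℂ :=
    Bx 0 + ((-1) ^ g * I 0 * V 0 / y) • (Pi.single (Fin.last g) 1 : Fin (g+1) → ℂ) with hr0
  have hdet1 : (x • (1 : Matrix (Fin (g + 1)) (Fin (g + 1)) ℂ) + todaLax g I V y).det =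
      (Bx.updateRow 0 r0).det +
        ((-1) ^ g * y) * ((Bx.updateRow 0 r0).updateRow (Fin.last g) (Pi.single 0 1)).det := by
    rw [hA, Matrix.det_updateRow_add, Matrix.det_updateRow_smul,
      show Bx (Fin.last g) = (Bx.updateRow 0 r0) (Fin.last g) from
        (Matrix.updateRow_ne hl0).symm,
      Matrix.updateRow_eq_self]
  have hdet2 : (Bx.updateRow 0 r0).det =
      Bx.det + ((-1) ^ g * I 0 * V 0 / y) * (Bx.updateRow 0 (Pi.single (Fin.last g) 1)).det := by
    rw [hr0, Matrix.det_updateRow_add, Matrix.det_updateRow_smul, Matrix.updateRow_eq_self]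
  have hdet3 : ((Bx.updateRow 0 r0).updateRow (Fin.last g) (Pi.single 0 1)).det =
      (Bx.updateRow (Fin.last g) (Pi.single 0 1)).det + ((-1) ^ g * I 0 * V 0 / y) *
        ((Bx.updateRow 0 (Pi.single (Fin.last g) 1)).updateRow (Fin.last g) (Pi.single 0 1)).det := by
    rw [updateRow_comm' Bx (Ne.symm hl0) r0 (Pi.single 0 1), hr0,
      Matrix.det_updateRow_add, Matrix.det_updateRow_smul,
      show Bx 0 = (Bx.updateRow (Fin.last g) (Pi.single 0 1)) 0 from
        (Matrix.updateRow_ne (Ne.symm hl0)).symm,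
      Matrix.updateRow_eq_self,
      updateRow_comm' Bx (Ne.symm hl0) (Pi.single (Fin.last g) 1) (Pi.single 0 1)]
  have hΓdet : (Bx.updateRow 0 (Pi.single (Fin.last g) 1)).det
      = (-1) ^ g * ∏ i : Fin g, ee i.succ := det_gamma g hg _ _
  have hΒdet : (Bx.updateRow (Fin.last g) (Pi.single 0 1)).det = (-1) ^ g := det_beta g _ _
  -- evaluation
  have hBx : Bp.map (eval x) = Bx := by
    have h := baseM_map g (evalRingHom x) (fun i => (X : ℂ[X]) + C (dd i)) (fun i => C (ee i))
    rw [Polynomial.coe_evalRingHom] at h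
    have h1 : ((eval x) ∘ fun i : Fin (g + 1) => (X : ℂ[X]) + C (dd i)) = fun i => x + dd i :=
      funext fun i => by simp
    have h2 : ((eval x) ∘ fun i : Fin (g + 1) => C (ee i)) = fun i => ee i :=
      funext fun i => by simp
    rw [hBpdef, h, h1, h2]
  have hsingle : ∀ a : Fin (g + 1), (eval x) ∘ (Pi.single a (1 : ℂ[X])) = Pi.single a 1 := by
    intro a; funext j
    rcases eq_or_ne j a with h | h <;> simp [Pi.single_apply, h]
  have hΔmap : Δp.map (eval x) =
      (Bx.updateRow 0 (Pi.single (Fin.last g) 1)).updateRow (Fin.last g) (Pi.single 0 1) := by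
    rw [hΔpdef, updateRow_map', updateRow_map', hBx, hsingle, hsingle]
  have hdet_eval : ∀ (M : Matrix (Fin (g + 1)) (Fin (g + 1)) ℂ[X]),
      eval x M.det = (M.map (eval x)).det := by
    intro M
    have := RingHom.map_det (evalRingHom x) M
    simpa [RingHom.mapMatrix_apply, Polynomial.coe_evalRingHom] using this
  have heval : eval x q = Bx.det + (I 0 * V 0) *
      ((Bx.updateRow 0 (Pi.single (Fin.last g) 1)).updateRow (Fin.last g) (Pi.single 0 1)).det := by
    rw [hqdef, eval_add, eval_mul, eval_C, hdet_eval, hdet_eval, hBx, hΔmap]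
  have hqx : eval x q = x ^ (g + 1) + ∑ k : Fin (g + 1), q.coeff k * x ^ (k : ℕ) := by
    rw [Polynomial.eval_eq_sum_range' (lt_of_le_of_lt hqdeg (Nat.lt_succ_self _)) x,
      Finset.sum_range_succ, hclead, one_mul,
      Fin.sum_univ_eq_sum_range (fun k => q.coeff k * x ^ k) (g + 1)]
    ring
  -- assemble
  have hprod : (∏ i, I i * V i) = (I 0 * V 0) * ∏ i : Fin g, ee i.succ := by
    rw [Fin.prod_univ_succ (fun i => I i * V i)]
  obtain ⟨B, hB⟩ : ∃ b : ℂ, Bx.det = b := ⟨_, rfl⟩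
  obtain ⟨D, hD⟩ : ∃ d : ℂ,
      ((Bx.updateRow 0 (Pi.single (Fin.last g) 1)).updateRow (Fin.last g)
        (Pi.single 0 1)).det = d := ⟨_, rfl⟩
  obtain ⟨P, hP⟩ : ∃ p : ℂ, (∏ i : Fin g, ee i.succ) = p := ⟨_, rfl⟩
  rw [hdet1, hdet2, hdet3, hΓdet, hΒdet, hprod, ← hqx, heval, hB, hD, hP]
  clear_value q Δp Bp r0 Bx ee dd
  clear hdet1 hdet2 hdet3 hΓdet hΒdet hprod hqx heval hA hB hD hP hBdet hBdeg hBmon hΔdeg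
    hCdeg hqdeg hBc hclead hBx hsingle hΔmap hdet_eval hdd hee hBpdef hΔpdef hqdef hr0 hBxdef
  have he : ((-1 : ℂ)) ^ g * (-1) ^ g = 1 := by
    rw [← pow_add]
    exact Even.neg_one_pow ⟨g, rfl⟩
  field_simp
  linear_combination (I 0 * V 0 * P + y ^ 2 + I 0 * V 0 * y * D) * he
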